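/- Parametric coarse correlated price of anarchy bound for single-item γ-FPA without overbidding: Let γ ∈ [0,1), let α be a real with α ≥ γ and α > 0, let n ≥ 2, and let v : Fin n → ℝ≥0 be valuations. Consider a single-item γ-approximate first-price auction and let μ be any coarse correlated equilibrium under no overbidding with all utilities, payments and SW μ-integrable. Then max_i v_i ≤ ((1 + α − γ)/(α·(1 − e^{−1/α})))·E_{b∼μ}[SW(b)]. -/

import Mathlib

open MeasureTheory
open scoped NNReal

/-- Parametric coarse correlated price of anarchy bound for the single-item
γ-approximate first-price auction without overbidding: for any real `α ≥ γ`, `α > 0`,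
and any coarse correlated equilibrium `μ` supported on no-overbidding profiles, the
optimal welfare `max_i v_i` is at most `(1 + α - γ)/(α(1 - e^{-1/α}))` times the
expected welfare.  Here `w b` is the highest bidder (ties to the smallest index), the
winner pays some `p b` with `γ·b_{w b} ≤ p b ≤ b_{w b}`, the winner's utility is
`v_{w b} - p b` and all other utilities are `0`; `SW b = v_{w b}`. -/
theorem cce_poa_single_item_FPA_no_overbidding
    (γ : ℝ) (hγ0 : 0 ≤ γ) (hγ1 : γ < 1)
    (α : ℝ) (hαγ : γ ≤ α) (hα : 0 < α)
    (n : ℕ) (hn : 2 ≤ n)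
    (v : Fin n → ℝ≥0)
    (w : (Fin n → ℝ≥0) → Fin n)
    (hw : ∀ b, (∀ i, b i ≤ b (w b)) ∧ ∀ i, b i = b (w b) → w b ≤ i)
    (p : (Fin n → ℝ≥0) → ℝ)
    (hp : ∀ b, γ * (b (w b) : ℝ) ≤ p b ∧ p b ≤ (b (w b) : ℝ))
    (u : Fin n → (Fin n → ℝ≥0) → ℝ)
    (hu : ∀ i b, u i b = if i = w b then (v (w b) : ℝ) - p b else 0)
    (μ : Measure (Fin n → ℝ≥0)) [IsProbabilityMeasure μ]
    (hNOB : ∀ᵐ b ∂μ, ∀ i, b i ≤ v i)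
    (hIntu : ∀ i, Integrable (u i) μ) (hIntp : Integrable p μ)
    (hIntSW : Integrable (fun b => (v (w b) : ℝ)) μ)
    (hIntdev : ∀ i (b' : ℝ≥0), Integrable (fun b => u i (Function.update b i b')) μ)
    (hCCE : ∀ i (b' : ℝ≥0), b' ≤ v i →
      ∫ b, u i (Function.update b i b') ∂μ ≤ ∫ b, u i b ∂μ) :
    ((Finset.univ.sup v : ℝ≥0) : ℝ)
      ≤ ((1 + α - γ) / (α * (1 - Real.exp (-1/α)))) * ∫ b, (v (w b) : ℝ) ∂μ := by
  classical
  have hne : (Finset.univ : Finset (Fin n)).Nonempty :=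
    ⟨⟨0, by omega⟩, Finset.mem_univ _⟩
  obtain ⟨i0, -, hi0⟩ := Finset.exists_mem_eq_sup Finset.univ hne v
  set V : ℝ := ((Finset.univ.sup v : ℝ≥0) : ℝ) with hVdef
  have hVi0 : (v i0 : ℝ) = V := by rw [hVdef, hi0]
  set S : (Fin n → ℝ≥0) → ℝ := fun b => (v (w b) : ℝ) with hSdef
  set G : (Fin n → ℝ≥0) → ℝ := fun b => (b (w b) : ℝ) with hGdef
  set s : ℝ := ∫ b, S b ∂μ with hsdef
  set g : ℝ := ∫ b, G b ∂μ with hgdef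
  set U : ℝ := ∫ b, u i0 b ∂μ with hUdef
  -- positivity of the coefficient pieces
  have hexp1 : Real.exp (-1/α) < 1 := by
    rw [Real.exp_lt_one_iff, neg_div]
    have : (0:ℝ) < 1/α := by positivity
    linarith
  have hexp0 : 0 < Real.exp (-1/α) := Real.exp_pos _
  have hD : 0 < α * (1 - Real.exp (-1/α)) := by
    apply mul_pos hα; linarith
  have hnum : 0 < 1 + α - γ := by linarith
  -- basic facts about G and S
  have hGnn : ∀ b, 0 ≤ G b := fun b => (b (w b)).coe_nonneg
  have hSnn : ∀ b, 0 ≤ S b := fun b => (v (w b)).coe_nonneg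
  have hGleS : ∀ᵐ b ∂μ, G b ≤ S b := by
    filter_upwards [hNOB] with b hb
    exact_mod_cast hb (w b)
  have hGmax : ∀ b, G b = Finset.univ.sup' hne (fun i => ((b i : ℝ))) := by
    intro b
    apply le_antisymm
    · exact Finset.le_sup' (fun i => ((b i : ℝ))) (Finset.mem_univ (w b))
    · apply Finset.sup'_le
      intro i _
      exact_mod_cast (hw b).1 i
  have hGmeas : Measurable G := by
    have h1 : Measurable fun b : Fin n → ℝ≥0 =>
        Finset.univ.sup' hne fun i => ((b i : ℝ)) := by
      have hm := Finset.measurable_sup' hne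
        (f := fun (i : Fin n) (b : Fin n → ℝ≥0) => ((b i : ℝ)))
        (fun i _ => measurable_coe_nnreal_real.comp (measurable_pi_apply i))
      convert hm using 1
      ext b
      simp [Finset.sup'_apply]
    have : G = fun b => Finset.univ.sup' hne fun i => ((b i : ℝ)) := funext hGmax
    rw [this]; exact h1
  have hIntG : Integrable G μ := by
    apply hIntSW.mono' hGmeas.aestronglyMeasurable
    filter_upwards [hGleS] with b hb
    rw [Real.norm_eq_abs, abs_of_nonneg (hGnn b)]
    exact hb
  have hg_le_s : g ≤ s := integral_mono_ae hIntG hIntSW hGleS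
  have hs_nn : 0 ≤ s := integral_nonneg hSnn
  -- U ≤ s - γ g
  have hU_le : U ≤ s - γ * g := by
    have hpt : ∀ᵐ b ∂μ, u i0 b ≤ S b - γ * G b := by
      filter_upwards [hGleS] with b hb
      rw [hu i0 b]
      split_ifs with h
      · have := (hp b).1
        simp only [hSdef, hGdef]
        linarith
      · have h1 : γ * G b ≤ G b := by
          nlinarith [hGnn b]
        linarith
    calc U ≤ ∫ b, (S b - γ * G b) ∂μ :=
          integral_mono_ae (hIntu i0) (hIntSW.sub ((hIntG.const_mul γ))) hpt
      _ = s - γ * g := by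
          rw [integral_sub hIntSW (hIntG.const_mul γ), integral_const_mul]
  rcases le_or_gt V 0 with hV0 | hV
  · calc ((Finset.univ.sup v : ℝ≥0) : ℝ) = V := rfl
      _ ≤ 0 := hV0
      _ ≤ ((1 + α - γ) / (α * (1 - Real.exp (-1/α)))) * s := by
          apply mul_nonneg (div_nonneg (by linarith) hD.le) hs_nn
  -- main case V > 0
  set T : ℝ := (1 - Real.exp (-1/α)) * V with hTdef
  have hT0 : 0 < T := by apply mul_pos _ hV; linarith
  have hTV : T < V := by nlinarith
  have hVT : V - T = Real.exp (-1/α) * V := by rw [hTdef]; ring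
  -- the deviation bound
  have hdev : ∀ t : ℝ, 0 < t → t < V → (μ {x | G x < t}).toReal ≤ U / (V - t) := by
    intro t ht htV
    set y : ℝ≥0 := t.toNNReal with hydef
    have hyt : (y : ℝ) = t := Real.coe_toNNReal _ ht.le
    have hyv : y ≤ v i0 := by
      rw [hydef, Real.toNNReal_le_iff_le_coe, hVi0]
      exact htV.le
    have hmeasset : MeasurableSet {x | G x < t} := hGmeas measurableSet_Iio
    have hpt : ∀ b, Set.indicator {x | G x < t} (fun _ => V - t) b
        ≤ u i0 (Function.update b i0 y) := by
      intro b
      set c := Function.update b i0 y with hc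
      have hcy : c i0 = y := Function.update_self _ _ _
      by_cases hb : b ∈ {x | G x < t}
      · rw [Set.indicator_of_mem hb]
        have hb : G b < t := hb
        have hwc : i0 = w c := by
          by_contra hne'
          have h1 : c (w c) = b (w c) := Function.update_of_ne (fun h => hne' h.symm) _ _
          have h2 : (c (w c) : ℝ) ≤ G b := by
            rw [h1]; exact_mod_cast (hw b).1 (w c)
          have h3 : (y : ℝ) ≤ (c (w c) : ℝ) := by
            rw [← hcy]; exact_mod_cast (hw c).1 i0
          rw [hyt] at h3
          linarith
        rw [hu i0 c, if_pos hwc]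
        have hpc : p c ≤ (c (w c) : ℝ) := (hp c).2
        rw [← hwc, hcy, hyt] at hpc
        rw [← hwc, hVi0]
        linarith
      · rw [Set.indicator_of_notMem hb, hu i0 c]
        split_ifs with h
        · have hpc : p c ≤ (c (w c) : ℝ) := (hp c).2
          rw [← h, hcy, hyt] at hpc
          rw [← h, hVi0]
          linarith
        · exact le_rfl
    have hindint : Integrable (fun b => Set.indicator {x | G x < t} (fun _ => V - t) b) μ := by
      rw [integrable_indicator_iff hmeasset]
      exact integrableOn_const (measure_ne_top μ _)
    have key : (V - t) * (μ {x | G x < t}).toReal ≤ U := by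
      calc (V - t) * (μ {x | G x < t}).toReal
          = ∫ b, Set.indicator {x | G x < t} (fun _ => V - t) b ∂μ := by
            rw [integral_indicator_const _ hmeasset, smul_eq_mul, mul_comm]; rfl
        _ ≤ ∫ b, u i0 (Function.update b i0 y) ∂μ :=
            integral_mono hindint (hIntdev i0 y) hpt
        _ ≤ U := hCCE i0 y hyv
    rw [le_div_iff₀ (by linarith : (0:ℝ) < V - t), mul_comm]
    exact key
  -- layer cake for min (G x) T
  have hG'meas : Measurable fun x => min (G x) T := hGmeas.min measurable_const
  have hIntG' : Integrable (fun x => min (G x) T) μ := by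
    apply hIntG.mono' hG'meas.aestronglyMeasurable
    filter_upwards with b
    rw [Real.norm_eq_abs, abs_of_nonneg (le_min (hGnn b) hT0.le)]
    exact min_le_left _ _
  have hlc : ∫ x, min (G x) T ∂μ
      = ∫ t in Set.Ioi 0, (μ {x | t ≤ min (G x) T}).toReal := by
    exact hIntG'.integral_eq_integral_meas_le
      (Filter.Eventually.of_forall fun b => le_min (hGnn b) hT0.le)
  set φ : ℝ → ℝ := fun t => (μ {x | t ≤ min (G x) T}).toReal with hφdef
  have hφanti : Antitone φ := by
    intro t1 t2 h12
    apply ENNReal.toReal_mono (measure_ne_top μ _)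
    apply measure_mono
    intro x hx
    exact le_trans h12 hx
  have hφnn : ∀ t, 0 ≤ φ t := fun t => ENNReal.toReal_nonneg
  have hφle1 : ∀ t, φ t ≤ 1 := by
    intro t
    have h1 : (μ {x | t ≤ min (G x) T}).toReal ≤ (μ Set.univ).toReal :=
      ENNReal.toReal_mono (measure_ne_top _ _) (measure_mono (Set.subset_univ _))
    rw [measure_univ, ENNReal.toReal_one] at h1
    exact h1
  have hφmeas : Measurable φ := hφanti.measurable
  have hφ0 : ∀ t ∈ Set.Ioi T, φ t = 0 := by
    intro t ht
    have : {x | t ≤ min (G x) T} = ∅ := by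
      ext x
      simp only [Set.mem_setOf_eq, Set.mem_empty_iff_false, iff_false, not_le]
      exact lt_of_le_of_lt (min_le_right _ _) ht
    rw [hφdef]; simp only; rw [this, measure_empty]; simp
  have hφint1 : IntegrableOn φ (Set.Ioc 0 T) := by
    apply Integrable.mono' (g := fun _ => (1:ℝ))
    · exact integrableOn_const (by simp [hT0.le])
    · exact hφmeas.aestronglyMeasurable
    · filter_upwards with t
      rw [Real.norm_eq_abs, abs_of_nonneg (hφnn t)]
      exact hφle1 t
  have hφint2 : IntegrableOn φ (Set.Ioi T) := by
    rw [integrableOn_congr_fun hφ0 measurableSet_Ioi]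
    exact integrableOn_zero
  -- split the integral
  have hsplit : ∫ t in Set.Ioi 0, φ t = ∫ t in Set.Ioc 0 T, φ t := by
    rw [← Set.Ioc_union_Ioi_eq_Ioi hT0.le,
      setIntegral_union (Set.Ioc_disjoint_Ioi le_rfl) measurableSet_Ioi hφint1 hφint2,
      setIntegral_congr_fun measurableSet_Ioi hφ0]
    simp
  -- lower bound the integrand on Ioo 0 T
  have hptw : ∀ t ∈ Set.Ioo (0:ℝ) T, 1 - U / (V - t) ≤ φ t := by
    intro t ht
    obtain ⟨ht0, htT⟩ := ht
    have htV : t < V := lt_trans htT hTV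
    have hseteq : {x | t ≤ min (G x) T} = {x | G x < t}ᶜ := by
      ext x
      simp only [Set.mem_setOf_eq, Set.mem_compl_iff, not_lt, le_min_iff]
      constructor
      · rintro ⟨h1, -⟩; exact h1
      · intro h1; exact ⟨h1, htT.le⟩
    have hmeasset : MeasurableSet {x | G x < t} := hGmeas measurableSet_Iio
    have hcompl : μ {x | G x < t}ᶜ = 1 - μ {x | G x < t} :=
      prob_compl_eq_one_sub hmeasset
    have hφt : φ t = 1 - (μ {x | G x < t}).toReal := by
      rw [hφdef]; simp only
      rw [hseteq, hcompl, ENNReal.toReal_sub_of_le prob_le_one (by norm_num)]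
      simp
    rw [hφt]
    have := hdev t ht0 htV
    linarith
  -- integrability of the lower bound on the interval
  have hcont : ContinuousOn (fun t : ℝ => 1 - U / (V - t)) (Set.Icc 0 T) := by
    apply ContinuousOn.sub continuousOn_const
    apply ContinuousOn.div continuousOn_const
    · exact ContinuousOn.sub continuousOn_const continuousOn_id
    · intro x hx
      have : x ≤ T := hx.2
      have : x < V := lt_of_le_of_lt this hTV
      intro hc
      rw [sub_eq_zero] at hc
      linarith [hc]
  have hlbint : IntegrableOn (fun t : ℝ => 1 - U / (V - t)) (Set.Ioo 0 T) :=
    (hcont.integrableOn_Icc).mono_set Set.Ioo_subset_Icc_self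
  have hφintIoo : IntegrableOn φ (Set.Ioo 0 T) :=
    hφint1.mono_set Set.Ioo_subset_Ioc_self
  -- compare
  have hcmp : ∫ t in Set.Ioo (0:ℝ) T, (1 - U / (V - t))
      ≤ ∫ t in Set.Ioo (0:ℝ) T, φ t :=
    setIntegral_mono_on hlbint hφintIoo measurableSet_Ioo hptw
  -- compute the lower-bound integral via FTC
  have hFTC : ∫ t in (0:ℝ)..T, (1 - U / (V - t)) = T - U / α := by
    have hderiv : ∀ t ∈ Set.uIcc (0:ℝ) T,
        HasDerivAt (fun t : ℝ => t + U * Real.log (V - t)) (1 - U / (V - t)) t := by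
      intro t ht
      rw [Set.uIcc_of_le hT0.le] at ht
      have htV : V - t ≠ 0 := by
        have : t ≤ T := ht.2
        have : t < V := lt_of_le_of_lt this hTV
        intro hc; rw [sub_eq_zero] at hc; linarith [hc]
      have h1 : HasDerivAt (fun t : ℝ => V - t) (-1) t := by
        simpa using (hasDerivAt_id' t).const_sub V
      have h2 : HasDerivAt (fun t : ℝ => Real.log (V - t)) ((V - t)⁻¹ * (-1)) t :=
        (Real.hasDerivAt_log htV).comp t h1
      have h3 : HasDerivAt (fun t : ℝ => t + U * Real.log (V - t))
          (1 + U * ((V - t)⁻¹ * (-1))) t :=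
        (hasDerivAt_id t).add ((h2.const_mul U))
      convert h3 using 1
      field_simp
      ring
    have hcont' : IntervalIntegrable (fun t : ℝ => 1 - U / (V - t)) volume 0 T := by
      apply ContinuousOn.intervalIntegrable
      rwa [Set.uIcc_of_le hT0.le]
    rw [intervalIntegral.integral_eq_sub_of_hasDerivAt hderiv hcont']
    have hlogVT : Real.log (V - T) = -1/α + Real.log V := by
      rw [hVT, Real.log_mul (Real.exp_ne_zero _) (ne_of_gt hV), Real.log_exp]
    rw [hlogVT, sub_zero]
    ring
  -- chain everything
  have hchain : T - U / α ≤ g := by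
    calc T - U / α = ∫ t in (0:ℝ)..T, (1 - U / (V - t)) := hFTC.symm
      _ = ∫ t in Set.Ioc (0:ℝ) T, (1 - U / (V - t)) := by
          rw [intervalIntegral.integral_of_le hT0.le]
      _ = ∫ t in Set.Ioo (0:ℝ) T, (1 - U / (V - t)) := integral_Ioc_eq_integral_Ioo
      _ ≤ ∫ t in Set.Ioo (0:ℝ) T, φ t := hcmp
      _ = ∫ t in Set.Ioc (0:ℝ) T, φ t := integral_Ioc_eq_integral_Ioo.symm
      _ = ∫ t in Set.Ioi (0:ℝ), φ t := hsplit.symm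
      _ = ∫ x, min (G x) T ∂μ := hlc.symm
      _ ≤ g := integral_mono hIntG' hIntG fun x => min_le_left _ _
  have hfin : α * T ≤ (1 + α - γ) * s := by
    have h1 : α * (T - U / α) ≤ α * g := mul_le_mul_of_nonneg_left hchain hα.le
    rw [mul_sub, mul_div_cancel₀ _ (ne_of_gt hα)] at h1
    have h2 : (α - γ) * g ≤ (α - γ) * s :=
      mul_le_mul_of_nonneg_left hg_le_s (by linarith)
    linarith
  have hmain : V * (α * (1 - Real.exp (-1/α))) ≤ (1 + α - γ) * s := by
    calc V * (α * (1 - Real.exp (-1/α))) = α * T := by rw [hTdef]; ring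
      _ ≤ (1 + α - γ) * s := hfin
  show V ≤ _
  rw [div_mul_eq_mul_div, le_div_iff₀ hD]
  linarith
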